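/- First concentration compactness principle (the paper's Lemma 2.2, Euclidean case): let 0 < p < ∞ and let {f_j} ⊂ L^p(ℝ^N) satisfy ∫_{ℝ^N} |f_j|^p du = 1 for all j, and set ρ_j = |f_j|^p du. Then there is a subsequence (still denoted {ρ_j}) such that exactly one of the following holds: (1) (vanishing) for every R > 0, lim_{j→∞} sup_{u ∈ ℝ^N} ∫_{B(u,R)} ρ_j = 0; (2) (compactness) there exist points {u_j} ⊂ ℝ^N such that for every sufficiently small ε > 0 there is R₀ > 0 with ∫_{B(u_j, R₀)} ρ_j > 1 − ε for all j; (3) (dichotomy) there exists k ∈ (0,1) such that for every sufficiently small ε > 0 there exist R₀ > 0 and points {u_j} ⊂ ℝ^N such that for every R ≥ R₀, limsup_{j→∞} ( |k − ∫_{B(u_j,R)} ρ_j| + |(1 − k) − ∫_{ℝ^N ∖ B(u_j,R)} ρ_j| ) ≤ ε. -/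

import Mathlib

open MeasureTheory Filter ENNReal Metric

/-- Vanishing alternative: for every `R > 0`,
`sup_{u} ∫_{B(u,R)} |g_j|^p du → 0` as `j → ∞`. -/
def CCVanishing {N : ℕ} (p : ℝ) (g : ℕ → EuclideanSpace ℝ (Fin N) → ℝ) : Prop :=
  ∀ R > (0 : ℝ),
    Tendsto (fun j => ⨆ u : EuclideanSpace ℝ (Fin N),
      ∫ v in Metric.ball u R, |g j v| ^ p) atTop (nhds 0)

/-- Compactness alternative: there are points `{u_j}` such that for every sufficiently small
`ε > 0` there is `R₀ > 0` with `∫_{B(u_j, R₀)} |g_j|^p du > 1 − ε` for all `j`. -/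
def CCCompactness {N : ℕ} (p : ℝ) (g : ℕ → EuclideanSpace ℝ (Fin N) → ℝ) : Prop :=
  ∃ u : ℕ → EuclideanSpace ℝ (Fin N), ∃ ε₀ > (0 : ℝ), ∀ ε, 0 < ε → ε < ε₀ →
    ∃ R₀ > (0 : ℝ), ∀ j : ℕ, (1 : ℝ) - ε < ∫ v in Metric.ball (u j) R₀, |g j v| ^ p

/-- Dichotomy alternative: there is `k ∈ (0,1)` such that for every sufficiently small `ε > 0`
there are `R₀ > 0` and points `{u_j}` such that for every `R ≥ R₀`,
`limsup_j ( |k − ∫_{B(u_j,R)} |g_j|^p| + |(1−k) − ∫_{B(u_j,R)ᶜ} |g_j|^p| ) ≤ ε`. -/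
def CCDichotomy {N : ℕ} (p : ℝ) (g : ℕ → EuclideanSpace ℝ (Fin N) → ℝ) : Prop :=
  ∃ k : ℝ, 0 < k ∧ k < 1 ∧ ∃ ε₀ > (0 : ℝ), ∀ ε, 0 < ε → ε < ε₀ →
    ∃ R₀ > (0 : ℝ), ∃ u : ℕ → EuclideanSpace ℝ (Fin N), ∀ R ≥ R₀,
      Filter.limsup (fun j =>
          |k - ∫ v in Metric.ball (u j) R, |g j v| ^ p| +
          |(1 - k) - ∫ v in (Metric.ball (u j) R)ᶜ, |g j v| ^ p|) atTop ≤ ε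

set_option maxHeartbeats 1000000

section CCaux
variable {N : ℕ} {p : ℝ}

private lemma rho_nonneg (p : ℝ) (g : EuclideanSpace ℝ (Fin N) → ℝ) (v : EuclideanSpace ℝ (Fin N)) :
    0 ≤ |g v| ^ p := Real.rpow_nonneg (abs_nonneg _) p

private lemma rho_integrable (hp : 0 < p)
    {g : EuclideanSpace ℝ (Fin N) → ℝ} (h : MemLp g (ENNReal.ofReal p) volume) :
    Integrable (fun v => |g v| ^ p) volume := by
  have h1 := h.integrable_norm_rpow (by simp [hp]) ENNReal.ofReal_ne_top
  simpa [ENNReal.toReal_ofReal hp.le, Real.norm_eq_abs] using h1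

private lemma setint_nonneg (g : EuclideanSpace ℝ (Fin N) → ℝ) (s : Set (EuclideanSpace ℝ (Fin N))) :
    0 ≤ ∫ v in s, |g v| ^ p :=
  integral_nonneg fun v => rho_nonneg p g v

private lemma setint_le_one (hp : 0 < p) {g : EuclideanSpace ℝ (Fin N) → ℝ}
    (h : MemLp g (ENNReal.ofReal p) volume) (hn : ∫ v, |g v| ^ p = 1)
    (s : Set (EuclideanSpace ℝ (Fin N))) :
    ∫ v in s, |g v| ^ p ≤ 1 := by
  calc ∫ v in s, |g v| ^ p ≤ ∫ v, |g v| ^ p :=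
        setIntegral_le_integral (rho_integrable hp h)
          (Filter.Eventually.of_forall (rho_nonneg p g))
    _ = 1 := hn

private lemma setint_mono (hp : 0 < p) {g : EuclideanSpace ℝ (Fin N) → ℝ}
    (h : MemLp g (ENNReal.ofReal p) volume) {s t : Set (EuclideanSpace ℝ (Fin N))}
    (hst : s ⊆ t) :
    ∫ v in s, |g v| ^ p ≤ ∫ v in t, |g v| ^ p :=
  setIntegral_mono_set (rho_integrable hp h).integrableOn
    (Filter.Eventually.of_forall (rho_nonneg p g)) (Filter.Eventually.of_forall hst)

private lemma bddQ (hp : 0 < p) {g : EuclideanSpace ℝ (Fin N) → ℝ}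
    (h : MemLp g (ENNReal.ofReal p) volume) (hn : ∫ v, |g v| ^ p = 1) (R : ℝ) :
    BddAbove (Set.range fun u : EuclideanSpace ℝ (Fin N) => ∫ v in Metric.ball u R, |g v| ^ p) := by
  refine ⟨1, ?_⟩
  rintro x ⟨u, rfl⟩
  exact setint_le_one hp h hn _

private lemma int_compl (hp : 0 < p) {g : EuclideanSpace ℝ (Fin N) → ℝ}
    (h : MemLp g (ENNReal.ofReal p) volume) (hn : ∫ v, |g v| ^ p = 1)
    (u : EuclideanSpace ℝ (Fin N)) (R : ℝ) :
    ∫ v in (Metric.ball u R)ᶜ, |g v| ^ p = 1 - ∫ v in Metric.ball u R, |g v| ^ p := by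
  have := integral_add_compl (measurableSet_ball (x := u) (ε := R)) (rho_integrable hp h)
  rw [hn] at this
  linarith

private lemma disj_sum_le (hp : 0 < p) {g : EuclideanSpace ℝ (Fin N) → ℝ}
    (h : MemLp g (ENNReal.ofReal p) volume) (hn : ∫ v, |g v| ^ p = 1)
    {s t : Set (EuclideanSpace ℝ (Fin N))} (hd : Disjoint s t) (ht : MeasurableSet t) :
    (∫ v in s, |g v| ^ p) + ∫ v in t, |g v| ^ p ≤ 1 := by
  rw [← setIntegral_union hd ht (rho_integrable hp h).integrableOn (rho_integrable hp h).integrableOn]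
  exact setint_le_one hp h hn _

private lemma tendsto_ball_int (hp : 0 < p) {g : EuclideanSpace ℝ (Fin N) → ℝ}
    (h : MemLp g (ENNReal.ofReal p) volume) (u : EuclideanSpace ℝ (Fin N)) :
    Tendsto (fun n : ℕ => ∫ v in Metric.ball u (n : ℝ), |g v| ^ p) atTop
      (nhds (∫ v, |g v| ^ p)) := by
  have hm : Monotone fun n : ℕ => Metric.ball u (n : ℝ) := fun a b hab =>
    Metric.ball_subset_ball (by exact_mod_cast hab)
  have := tendsto_setIntegral_of_monotone (fun n : ℕ => measurableSet_ball)
    hm (by rw [Metric.iUnion_ball_nat u]; exact (rho_integrable hp h).integrableOn)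
  rwa [Metric.iUnion_ball_nat u, setIntegral_univ] at this

/-- The concentration function at natural radii. -/
private noncomputable def Qfun (p : ℝ) (f : ℕ → EuclideanSpace ℝ (Fin N) → ℝ) (j n : ℕ) : ℝ :=
  ⨆ u : EuclideanSpace ℝ (Fin N), ∫ v in Metric.ball u (n : ℝ), |f j v| ^ p

private lemma int_le_Q (hp : 0 < p) {f : ℕ → EuclideanSpace ℝ (Fin N) → ℝ}
    (hmem : ∀ j, MemLp (f j) (ENNReal.ofReal p) volume)
    (hnorm : ∀ j, ∫ v, |f j v| ^ p = 1)
    (j : ℕ) {R : ℝ} {n : ℕ} (hRn : R ≤ (n : ℝ)) (u : EuclideanSpace ℝ (Fin N)) :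
    ∫ v in Metric.ball u R, |f j v| ^ p ≤ Qfun p f j n :=
  (setint_mono hp (hmem j) (Metric.ball_subset_ball hRn)).trans
    (le_ciSup (bddQ hp (hmem j) (hnorm j) _) u)

private lemma Q_nonneg (hp : 0 < p) {f : ℕ → EuclideanSpace ℝ (Fin N) → ℝ}
    (hmem : ∀ j, MemLp (f j) (ENNReal.ofReal p) volume)
    (hnorm : ∀ j, ∫ v, |f j v| ^ p = 1) (j n : ℕ) : 0 ≤ Qfun p f j n :=
  (setint_nonneg (f j) (Metric.ball 0 (n:ℝ))).trans
    (le_ciSup (bddQ hp (hmem j) (hnorm j) _) 0)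

private lemma Q_le_one (hp : 0 < p) {f : ℕ → EuclideanSpace ℝ (Fin N) → ℝ}
    (hmem : ∀ j, MemLp (f j) (ENNReal.ofReal p) volume)
    (hnorm : ∀ j, ∫ v, |f j v| ^ p = 1) (j n : ℕ) : Qfun p f j n ≤ 1 :=
  ciSup_le fun _ => setint_le_one hp (hmem j) (hnorm j) _

private lemma Q_mono (hp : 0 < p) {f : ℕ → EuclideanSpace ℝ (Fin N) → ℝ}
    (hmem : ∀ j, MemLp (f j) (ENNReal.ofReal p) volume)
    (hnorm : ∀ j, ∫ v, |f j v| ^ p = 1) (j : ℕ) {m n : ℕ} (hmn : m ≤ n) :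
    Qfun p f j m ≤ Qfun p f j n :=
  ciSup_le fun u => int_le_Q hp hmem hnorm j (by exact_mod_cast hmn) u

private lemma lt_Q_exists {f : ℕ → EuclideanSpace ℝ (Fin N) → ℝ} {j n : ℕ} {b : ℝ}
    (h : b < Qfun p f j n) :
    ∃ u : EuclideanSpace ℝ (Fin N), b < ∫ v in Metric.ball u (n : ℝ), |f j v| ^ p :=
  exists_lt_of_lt_ciSup h

private lemma finite_radius {P : ℕ → ℝ → Prop} (J : ℕ)
    (mono : ∀ j R R', R ≤ R' → P j R → P j R')
    (h : ∀ j < J, ∃ R, P j R) : ∃ R, ∀ j < J, P j R := by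
  induction J with
  | zero => exact ⟨0, fun j hj => absurd hj (Nat.not_lt_zero j)⟩
  | succ J ih =>
    obtain ⟨R, hR⟩ := ih fun j hj => h j (hj.trans (Nat.lt_succ_self J))
    obtain ⟨R', hR'⟩ := h J (Nat.lt_succ_self J)
    refine ⟨max R R', fun j hj => ?_⟩
    rcases Nat.lt_succ_iff_lt_or_eq.mp hj with hj | rfl
    · exact mono j R _ (le_max_left _ _) (hR j hj)
    · exact mono j R' _ (le_max_right _ _) hR'

end CCaux

section Main
variable {N : ℕ} {p : ℝ}

private lemma main_alt (hp : 0 < p) (f : ℕ → EuclideanSpace ℝ (Fin N) → ℝ)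
    (hmem : ∀ j, MemLp (f j) (ENNReal.ofReal p) volume)
    (hnorm : ∀ j, ∫ u, |f j u| ^ p = 1) :
    ∃ φ : ℕ → ℕ, StrictMono φ ∧
      (CCVanishing p (fun j => f (φ j)) ∨ CCCompactness p (fun j => f (φ j)) ∨
        CCDichotomy p (fun j => f (φ j))) := by
  -- extract a subsequence along which the concentration function converges pointwise
  have hcpt : IsCompact (Set.univ.pi fun _ : ℕ => Set.Icc (0:ℝ) 1) :=
    isCompact_univ_pi fun _ => isCompact_Icc
  have hQmem : ∀ j, Qfun p f j ∈ Set.univ.pi fun _ : ℕ => Set.Icc (0:ℝ) 1 := by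
    intro j n _
    exact ⟨Q_nonneg hp hmem hnorm j n, Q_le_one hp hmem hnorm j n⟩
  obtain ⟨L, hL, φ, hφ, hconv⟩ := hcpt.tendsto_subseq hQmem
  have hLn : ∀ n, Tendsto (fun j => Qfun p f (φ j) n) atTop (nhds (L n)) := by
    intro n
    exact tendsto_pi_nhds.mp hconv n
  have hL01 : ∀ n, 0 ≤ L n ∧ L n ≤ 1 := fun n => hL n (Set.mem_univ n)
  have hLbdd : BddAbove (Set.range L) := ⟨1, by rintro x ⟨n, rfl⟩; exact (hL01 n).2⟩
  set k := ⨆ n, L n with hkdef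
  have hLk : ∀ n, L n ≤ k := fun n => le_ciSup hLbdd n
  have hk0 : 0 ≤ k := (hL01 0).1.trans (hLk 0)
  have hk1 : k ≤ 1 := ciSup_le fun n => (hL01 n).2
  refine ⟨φ, hφ, ?_⟩
  rcases hk0.eq_or_lt with hk | hkpos
  · -- k = 0 : vanishing
    left
    intro R hR
    have hL0 : ∀ n : ℕ, L n = 0 := fun n => le_antisymm (le_of_le_of_eq (hLk n) hk.symm) (hL01 n).1
    set n := ⌈R⌉₊ with hn
    refine squeeze_zero (fun j => ?_) (fun j => ?_) (by rw [← hL0 n]; exact hLn n)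
    · exact (setint_nonneg (f (φ j)) (Metric.ball 0 R)).trans
        (le_ciSup (bddQ hp (hmem (φ j)) (hnorm (φ j)) R) 0)
    · exact ciSup_le fun u => int_le_Q hp hmem hnorm (φ j) (Nat.le_ceil R) u
  rcases hk1.eq_or_lt with hk | hklt
  · -- k = 1 : compactness
    right; left
    -- fixed centers carrying more than 1/2 of the mass within radius n₁
    have h34 : (3/4 : ℝ) < ⨆ n, L n := by rw [← hkdef, hk]; norm_num
    obtain ⟨n₁, hn₁⟩ := exists_lt_of_lt_ciSup h34
    have hu : ∀ j, ∃ w : EuclideanSpace ℝ (Fin N),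
        Qfun p f (φ j) n₁ - 1/8 < ∫ v in Metric.ball w (n₁ : ℝ), |f (φ j) v| ^ p :=
      fun j => lt_Q_exists (show Qfun p f (φ j) n₁ - 1/8 < Qfun p f (φ j) n₁ by
        linarith [Q_nonneg hp hmem hnorm (φ j) n₁])
    choose u hu using hu
    obtain ⟨J, hJ⟩ := (((hLn n₁).eventually_const_lt hn₁)).exists_forall_of_atTop
    have hhalf : ∀ j, J ≤ j → (1/2 : ℝ) < ∫ v in Metric.ball (u j) (n₁ : ℝ), |f (φ j) v| ^ p := by
      intro j hj
      have := hJ j hj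
      have := hu j
      linarith
    refine ⟨u, 1/2, by norm_num, ?_⟩
    intro ε hε hε12
    -- choose n with L n > 1 - ε/2 and near-optimal centers v j at radius n
    have h1e : (1 : ℝ) - ε/2 < ⨆ n, L n := by rw [← hkdef, hk]; linarith
    obtain ⟨n₂, hn₂⟩ := exists_lt_of_lt_ciSup h1e
    have hv : ∀ j, ∃ w : EuclideanSpace ℝ (Fin N),
        Qfun p f (φ j) n₂ - ε/2 < ∫ v in Metric.ball w (n₂ : ℝ), |f (φ j) v| ^ p :=
      fun j => lt_Q_exists (show Qfun p f (φ j) n₂ - ε/2 < Qfun p f (φ j) n₂ by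
        linarith [Q_nonneg hp hmem hnorm (φ j) n₂])
    choose v hv using hv
    obtain ⟨J₂, hJ₂⟩ := (((hLn n₂).eventually_const_lt hn₂)).exists_forall_of_atTop
    set Jm := max J J₂ with hJm
    -- for large j, the ball around v j carries mass > 1 - ε and meets the ball around u j
    have hbig : ∀ j, Jm ≤ j →
        1 - ε < ∫ v' in Metric.ball (u j) (2 * (n₂:ℝ) + (n₁:ℝ)), |f (φ j) v'| ^ p := by
      intro j hj
      have hvj : 1 - ε < ∫ v' in Metric.ball (v j) (n₂ : ℝ), |f (φ j) v'| ^ p := by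
        have := hJ₂ j (le_trans (le_max_right _ _) hj)
        have := hv j
        linarith
      have huj : (1/2 : ℝ) < ∫ v' in Metric.ball (u j) (n₁ : ℝ), |f (φ j) v'| ^ p :=
        hhalf j (le_trans (le_max_left _ _) hj)
      -- the two balls intersect
      have hnd : ¬ Disjoint (Metric.ball (v j) (n₂:ℝ)) (Metric.ball (u j) (n₁:ℝ)) := by
        intro hd
        have := disj_sum_le hp (hmem (φ j)) (hnorm (φ j)) hd measurableSet_ball
        linarith
      obtain ⟨x, hx1, hx2⟩ := Set.not_disjoint_iff.mp hnd
      rw [Metric.mem_ball] at hx1 hx2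
      have hsub : Metric.ball (v j) (n₂:ℝ) ⊆ Metric.ball (u j) (2 * (n₂:ℝ) + (n₁:ℝ)) := by
        intro y hy
        rw [Metric.mem_ball] at hy ⊢
        have hdist : dist (v j) (u j) ≤ dist x (v j) + dist x (u j) := by
          rw [dist_comm x (v j)]; exact dist_triangle _ _ _
        calc dist y (u j) ≤ dist y (v j) + dist (v j) (u j) := dist_triangle _ _ _
          _ < n₂ + (n₂ + n₁) := by linarith
          _ = 2 * (n₂:ℝ) + n₁ := by ring
      exact lt_of_lt_of_le hvj (setint_mono hp (hmem (φ j)) hsub)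
    -- for small j, enlarge the radius using convergence of ball integrals
    have hsmall : ∀ j < Jm, ∃ R : ℝ,
        1 - ε < ∫ v' in Metric.ball (u j) R, |f (φ j) v'| ^ p := by
      intro j _
      have ht := tendsto_ball_int hp (hmem (φ j)) (u j)
      rw [hnorm (φ j)] at ht
      obtain ⟨m, hm⟩ := (ht.eventually_const_lt (by linarith : 1 - ε < 1)).exists
      exact ⟨m, hm⟩
    obtain ⟨Rf, hRf⟩ := finite_radius
      (P := fun j R => 1 - ε < ∫ v' in Metric.ball (u j) R, |f (φ j) v'| ^ p) Jm
      (fun j R R' hRR' h => lt_of_lt_of_le h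
        (setint_mono hp (hmem (φ j)) (Metric.ball_subset_ball hRR'))) hsmall
    refine ⟨max (max (2 * (n₂:ℝ) + (n₁:ℝ)) Rf) 1, by positivity, fun j => ?_⟩
    rcases lt_or_ge j Jm with hj | hj
    · exact lt_of_lt_of_le (hRf j hj) (setint_mono hp (hmem (φ j))
        (Metric.ball_subset_ball ((le_max_right _ _).trans (le_max_left _ _))))
    · exact lt_of_lt_of_le (hbig j hj) (setint_mono hp (hmem (φ j))
        (Metric.ball_subset_ball ((le_max_left _ _).trans (le_max_left _ _))))
  · -- 0 < k < 1 : dichotomy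
    right; right
    refine ⟨k, hkpos, hklt, 1, one_pos, ?_⟩
    intro ε hε hε1
    obtain ⟨n₀, hn₀⟩ := exists_lt_of_lt_ciSup (by linarith : k - ε/8 < ⨆ n, L n)
    have hu : ∀ j, ∃ w : EuclideanSpace ℝ (Fin N),
        Qfun p f (φ j) n₀ - ε/8 < ∫ v in Metric.ball w (n₀ : ℝ), |f (φ j) v| ^ p :=
      fun j => lt_Q_exists (show Qfun p f (φ j) n₀ - ε/8 < Qfun p f (φ j) n₀ by
        linarith [Q_nonneg hp hmem hnorm (φ j) n₀])
    choose u hu using hu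
    refine ⟨(n₀ : ℝ) + 1, by positivity, u, fun R hR => ?_⟩
    have hn₀R : (n₀ : ℝ) ≤ R := by linarith
    -- eventually the integral over B(u j, R) is within ε/4 of k
    have hev1 : ∀ᶠ j in atTop, Qfun p f (φ j) ⌈R⌉₊ < k + ε/8 :=
      (hLn ⌈R⌉₊).eventually_lt_const (by linarith [hLk ⌈R⌉₊])
    have hev2 : ∀ᶠ j in atTop, k - ε/8 < Qfun p f (φ j) n₀ :=
      (hLn n₀).eventually_const_lt hn₀
    have hev : ∀ᶠ j in atTop,
        |k - ∫ v in Metric.ball (u j) R, |f (φ j) v| ^ p| +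
        |(1 - k) - ∫ v in (Metric.ball (u j) R)ᶜ, |f (φ j) v| ^ p| ≤ ε := by
      filter_upwards [hev1, hev2] with j h1 h2
      set A := ∫ v in Metric.ball (u j) R, |f (φ j) v| ^ p with hA
      have hup : A < k + ε/8 :=
        lt_of_le_of_lt (int_le_Q hp hmem hnorm (φ j) (Nat.le_ceil R) (u j)) h1
      have hlow : k - ε/4 < A := by
        have hm : (∫ v in Metric.ball (u j) (n₀:ℝ), |f (φ j) v| ^ p) ≤ A :=
          setint_mono hp (hmem (φ j)) (Metric.ball_subset_ball hn₀R)
        have := hu j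
        linarith
      have hcompl : ∫ v in (Metric.ball (u j) R)ᶜ, |f (φ j) v| ^ p = 1 - A :=
        int_compl hp (hmem (φ j)) (hnorm (φ j)) (u j) R
      rw [hcompl]
      have h1abs : |k - A| ≤ ε/4 := abs_le.mpr ⟨by linarith, by linarith⟩
      have h2abs : |(1 - k) - (1 - A)| ≤ ε/4 := by
        rw [show (1 - k) - (1 - A) = -(k - A) by ring, abs_neg]
        exact h1abs
      linarith
    exact limsup_le_of_le ((isBoundedUnder_of ⟨0, fun j =>
      add_nonneg (abs_nonneg _) (abs_nonneg _)⟩ :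
        Filter.IsBoundedUnder (· ≥ ·) Filter.atTop _).isCoboundedUnder_flip) hev

end Main

section CCexcl
variable {N : ℕ} {p : ℝ}

private lemma abs_term_le {k a : ℝ} (h0 : 0 ≤ a) (h1 : a ≤ 1) : |k - a| ≤ |k| + 1 :=
  abs_le.mpr ⟨by linarith [neg_abs_le k], by linarith [le_abs_self k]⟩

private lemma expr_bdd (hp : 0 < p) {g : ℕ → EuclideanSpace ℝ (Fin N) → ℝ}
    (hmem : ∀ j, MemLp (g j) (ENNReal.ofReal p) volume)
    (hnorm : ∀ j, ∫ v, |g j v| ^ p = 1)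
    (k : ℝ) (u : ℕ → EuclideanSpace ℝ (Fin N)) (R : ℝ) :
    Filter.IsBoundedUnder (· ≤ ·) Filter.atTop (fun j =>
        |k - ∫ v in Metric.ball (u j) R, |g j v| ^ p| +
        |(1 - k) - ∫ v in (Metric.ball (u j) R)ᶜ, |g j v| ^ p|) := by
  refine isBoundedUnder_of ⟨|k| + 1 + (|1 - k| + 1), fun j => ?_⟩
  have h1 := abs_term_le (k := k) (setint_nonneg (g j) (Metric.ball (u j) R))
    (setint_le_one hp (hmem j) (hnorm j) _)
  have h2 := abs_term_le (k := 1 - k) (setint_nonneg (g j) (Metric.ball (u j) R)ᶜ)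
    (setint_le_one hp (hmem j) (hnorm j) _)
  linarith

private lemma expr_cobdd (k : ℝ) {g : ℕ → EuclideanSpace ℝ (Fin N) → ℝ}
    (u : ℕ → EuclideanSpace ℝ (Fin N)) (R : ℝ) :
    Filter.IsCoboundedUnder (· ≤ ·) Filter.atTop (fun j =>
        |k - ∫ v in Metric.ball (u j) R, |g j v| ^ p| +
        |(1 - k) - ∫ v in (Metric.ball (u j) R)ᶜ, |g j v| ^ p|) :=
  (isBoundedUnder_of ⟨0, fun j => add_nonneg (abs_nonneg _) (abs_nonneg _)⟩ :
    Filter.IsBoundedUnder (· ≥ ·) Filter.atTop _).isCoboundedUnder_flip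

private lemma van_not_comp (hp : 0 < p) {g : ℕ → EuclideanSpace ℝ (Fin N) → ℝ}
    (hmem : ∀ j, MemLp (g j) (ENNReal.ofReal p) volume)
    (hnorm : ∀ j, ∫ v, |g j v| ^ p = 1)
    (hv : CCVanishing p g) : ¬ CCCompactness p g := by
  rintro ⟨u, ε₀, hε₀, H⟩
  set ε := min ε₀ 1 / 2 with hεdef
  have hε : 0 < ε := by positivity
  have hεlt : ε < ε₀ := by
    have : min ε₀ 1 ≤ ε₀ := min_le_left _ _
    have h2 : 0 < min ε₀ 1 := lt_min hε₀ one_pos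
    simp only [hεdef]; linarith
  obtain ⟨R₀, hR₀, hR⟩ := H ε hε hεlt
  obtain ⟨j, hj⟩ := ((hv R₀ hR₀).eventually_lt_const (show (0:ℝ) < 1/2 by norm_num)).exists
  have h1 : (1 : ℝ) - ε < ⨆ u' : EuclideanSpace ℝ (Fin N),
      ∫ v in Metric.ball u' R₀, |g j v| ^ p :=
    lt_of_lt_of_le (hR j) (le_ciSup (bddQ hp (hmem j) (hnorm j) R₀) (u j))
  have hε12 : ε ≤ 1/2 := by
    have : min ε₀ 1 ≤ 1 := min_le_right _ _
    simp only [hεdef]; linarith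
  linarith

private lemma van_not_dich (hp : 0 < p) {g : ℕ → EuclideanSpace ℝ (Fin N) → ℝ}
    (hmem : ∀ j, MemLp (g j) (ENNReal.ofReal p) volume)
    (hnorm : ∀ j, ∫ v, |g j v| ^ p = 1)
    (hv : CCVanishing p g) : ¬ CCDichotomy p g := by
  rintro ⟨k, hk0, hk1, ε₀, hε₀, H⟩
  set ε := min ε₀ k / 4 with hεdef
  have hε : 0 < ε := by positivity
  have hεlt : ε < ε₀ := by
    have : min ε₀ k ≤ ε₀ := min_le_left _ _
    have h2 : 0 < min ε₀ k := lt_min hε₀ hk0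
    simp only [hεdef]; linarith
  have hεk : ε ≤ k / 4 := by
    have : min ε₀ k ≤ k := min_le_right _ _
    simp only [hεdef]; linarith
  obtain ⟨R₀, hR₀, u, hlim⟩ := H ε hε hεlt
  have hls := hlim R₀ le_rfl
  -- vanishing at R₀ : eventually sup < k/2, hence the integral < k/2
  have hev : ∀ᶠ j in atTop, (⨆ u' : EuclideanSpace ℝ (Fin N),
      ∫ v in Metric.ball u' R₀, |g j v| ^ p) < k / 2 :=
    (hv R₀ hR₀).eventually_lt_const (by linarith)
  have hfreq : ∃ᶠ j in atTop, k / 2 ≤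
      |k - ∫ v in Metric.ball (u j) R₀, |g j v| ^ p| +
      |(1 - k) - ∫ v in (Metric.ball (u j) R₀)ᶜ, |g j v| ^ p| := by
    refine (hev.mono fun j hj => ?_).frequently
    have hint : (∫ v in Metric.ball (u j) R₀, |g j v| ^ p) < k / 2 :=
      lt_of_le_of_lt (le_ciSup (bddQ hp (hmem j) (hnorm j) R₀) (u j)) hj
    have h0 := setint_nonneg (p := p) (g j) (Metric.ball (u j) R₀)
    have habs : k / 2 ≤ |k - ∫ v in Metric.ball (u j) R₀, |g j v| ^ p| := by
      rw [abs_of_nonneg (by linarith)]; linarith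
    linarith [abs_nonneg ((1 - k) - ∫ v in (Metric.ball (u j) R₀)ᶜ, |g j v| ^ p)]
  have := le_limsup_of_frequently_le hfreq (expr_bdd hp hmem hnorm k u R₀)
  linarith

private lemma comp_not_dich (hp : 0 < p) {g : ℕ → EuclideanSpace ℝ (Fin N) → ℝ}
    (hmem : ∀ j, MemLp (g j) (ENNReal.ofReal p) volume)
    (hnorm : ∀ j, ∫ v, |g j v| ^ p = 1)
    (hc : CCCompactness p g) : ¬ CCDichotomy p g := by
  rintro ⟨k, hk0, hk1, ε₀', hε₀', H'⟩
  obtain ⟨u, ε₀, hε₀, H⟩ := hc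
  set ε := min (min ε₀ ε₀') (min k (1 - k)) / 4 with hεdef
  have hmin1 : 0 < min ε₀ ε₀' := lt_min hε₀ hε₀'
  have hmin2 : 0 < min k (1 - k) := lt_min hk0 (by linarith)
  have hε : 0 < ε := by positivity
  have hεlt : ε < ε₀ := by
    have h1 : min (min ε₀ ε₀') (min k (1-k)) ≤ ε₀ := (min_le_left _ _).trans (min_le_left _ _)
    have := lt_min hmin1 hmin2
    simp only [hεdef]; linarith
  have hεlt' : ε < ε₀' := by
    have h1 : min (min ε₀ ε₀') (min k (1-k)) ≤ ε₀' := (min_le_left _ _).trans (min_le_right _ _)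
    have := lt_min hmin1 hmin2
    simp only [hεdef]; linarith
  have hεk : 4 * ε ≤ k := by
    have h1 : min (min ε₀ ε₀') (min k (1-k)) ≤ k := (min_le_right _ _).trans (min_le_left _ _)
    simp only [hεdef]; linarith
  have hεk' : 4 * ε ≤ 1 - k := by
    have h1 : min (min ε₀ ε₀') (min k (1-k)) ≤ 1-k := (min_le_right _ _).trans (min_le_right _ _)
    simp only [hεdef]; linarith
  obtain ⟨R₀, hR₀, hcomp⟩ := H ε hε hεlt
  obtain ⟨R₁, hR₁, u', hlim⟩ := H' ε hε hεlt'
  set R := max R₀ R₁ with hRdef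
  set R₂ := R + 2 * R₀ with hR₂def
  have hRR₁ : R₁ ≤ R := le_max_right _ _
  have hRR₂ : R₁ ≤ R₂ := by
    have : (0:ℝ) < R₀ := hR₀
    simp only [hR₂def]; linarith
  have hev1 : ∀ᶠ j in atTop,
      |k - ∫ v in Metric.ball (u' j) R, |g j v| ^ p| +
      |(1 - k) - ∫ v in (Metric.ball (u' j) R)ᶜ, |g j v| ^ p| < 2 * ε :=
    eventually_lt_of_limsup_lt (lt_of_le_of_lt (hlim R hRR₁) (by linarith))
      (expr_bdd hp hmem hnorm k u' R)
  have hev2 : ∀ᶠ j in atTop,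
      |k - ∫ v in Metric.ball (u' j) R₂, |g j v| ^ p| +
      |(1 - k) - ∫ v in (Metric.ball (u' j) R₂)ᶜ, |g j v| ^ p| < 2 * ε :=
    eventually_lt_of_limsup_lt (lt_of_le_of_lt (hlim R₂ hRR₂) (by linarith))
      (expr_bdd hp hmem hnorm k u' R₂)
  obtain ⟨j, hj1, hj2⟩ := (hev1.and hev2).exists
  set a := ∫ v in Metric.ball (u' j) R, |g j v| ^ p with ha
  set b := ∫ v in Metric.ball (u' j) R₂, |g j v| ^ p with hb
  set c := ∫ v in Metric.ball (u j) R₀, |g j v| ^ p with hc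
  have hka : |k - a| < 2 * ε := by
    have := abs_nonneg ((1 - k) - ∫ v in (Metric.ball (u' j) R)ᶜ, |g j v| ^ p)
    linarith
  have hkb : |k - b| < 2 * ε := by
    have := abs_nonneg ((1 - k) - ∫ v in (Metric.ball (u' j) R₂)ᶜ, |g j v| ^ p)
    linarith
  have hcj : 1 - ε < c := hcomp j
  rcases le_or_gt (dist (u j) (u' j)) (R + R₀) with hdist | hdist
  · -- ball (u j) R₀ ⊆ ball (u' j) R₂
    have hsub : Metric.ball (u j) R₀ ⊆ Metric.ball (u' j) R₂ := by
      intro x hx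
      rw [Metric.mem_ball] at hx ⊢
      calc dist x (u' j) ≤ dist x (u j) + dist (u j) (u' j) := dist_triangle _ _ _
        _ < R₀ + (R + R₀) := by linarith
        _ = R₂ := by simp only [hR₂def]; ring
    have hbc : c ≤ b := setint_mono hp (hmem j) hsub
    have : b < k + 2 * ε := by
      have := neg_abs_le (k - b); have := le_abs_self (k - b); linarith [abs_lt.mp hkb]
    linarith
  · -- balls disjoint
    have hdisj : Disjoint (Metric.ball (u' j) R) (Metric.ball (u j) R₀) := by
      rw [Set.disjoint_left]
      intro x hx hx'
      rw [Metric.mem_ball] at hx hx'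
      have : dist (u j) (u' j) ≤ dist x (u j) + dist x (u' j) := by
        rw [dist_comm x (u j)]; exact dist_triangle _ _ _
      linarith
    have hsum : a + c ≤ 1 := disj_sum_le hp (hmem j) (hnorm j) hdisj measurableSet_ball
    have : k - 2 * ε < a := by linarith [abs_lt.mp hka]
    linarith

end CCexcl

/-- **First concentration compactness principle** (the paper's Lemma 2.2, Euclidean case).
Let `0 < p < ∞` and `{f_j} ⊂ L^p(ℝ^N)` with `∫ |f_j|^p = 1` for all `j`. Then some
subsequence satisfies exactly one of: vanishing, compactness, dichotomy. -/
theorem first_concentration_compactness (N : ℕ) (p : ℝ) (hp : 0 < p)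
    (f : ℕ → EuclideanSpace ℝ (Fin N) → ℝ)
    (hmem : ∀ j, MemLp (f j) (ENNReal.ofReal p) volume)
    (hnorm : ∀ j, ∫ u, |f j u| ^ p = 1) :
    ∃ φ : ℕ → ℕ, StrictMono φ ∧
      ((CCVanishing p (fun j => f (φ j)) ∧ ¬ CCCompactness p (fun j => f (φ j)) ∧
          ¬ CCDichotomy p (fun j => f (φ j))) ∨
       (¬ CCVanishing p (fun j => f (φ j)) ∧ CCCompactness p (fun j => f (φ j)) ∧
          ¬ CCDichotomy p (fun j => f (φ j))) ∨
       (¬ CCVanishing p (fun j => f (φ j)) ∧ ¬ CCCompactness p (fun j => f (φ j)) ∧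
          CCDichotomy p (fun j => f (φ j)))) := by

  obtain ⟨φ, hφ, halt⟩ := main_alt hp f hmem hnorm
  refine ⟨φ, hφ, ?_⟩
  have hmem' : ∀ j, MemLp (f (φ j)) (ENNReal.ofReal p) volume := fun j => hmem (φ j)
  have hnorm' : ∀ j, ∫ v, |f (φ j) v| ^ p = 1 := fun j => hnorm (φ j)
  rcases halt with h | h | h
  · exact Or.inl ⟨h, van_not_comp hp hmem' hnorm' h, van_not_dich hp hmem' hnorm' h⟩
  · exact Or.inr (Or.inl ⟨fun hv => van_not_comp hp hmem' hnorm' hv h, h,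
      comp_not_dich hp hmem' hnorm' h⟩)
  · exact Or.inr (Or.inr ⟨fun hv => van_not_dich hp hmem' hnorm' hv h,
      fun hc => comp_not_dich hp hmem' hnorm' hc h, h⟩)
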